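/- Let H be a weak Hopf algebra with bijective antipode, R = Im(Π^L), and A a left weak H-comodule algebra with the R-ring structure s_A(Π^L(h)) = ε(1_{<-1>} h) 1_{<0>}. Then for all g ∈ H and a ∈ A: a_{<-1>} S^{-1}(Π^L(g)) ⊗ a_{<0>} = a_{<-1>} ⊗ a_{<0>} s_A(Π^L(g)). Consequently the induced coaction A → H ⊗_R A has image contained in the Takeuchi product H ×_R A. -/
import Mathlib

open TensorProduct LinearMap MulOpposite

noncomputable section
namespace DK

variable (k : Type*) [CommRing k] (H : Type*) [Ring H] [Algebra k H]

/-- Given `u = Σ xᵢ ⊗ bᵢ ∈ H ⊗ B` and `ε : H → k`, the linear map `g ↦ Σ ε(xᵢ * g) • bᵢ`. -/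
def coPi (B : Type*) [AddCommGroup B] [Module k B] (ε : H →ₗ[k] k) (u : H ⊗[k] B) :
    H →ₗ[k] B :=
  ((TensorProduct.lid k B).toLinearMap
      ∘ₗ LinearMap.rTensor B (ε ∘ₗ LinearMap.mul' k H)
      ∘ₗ (TensorProduct.assoc k H H B).symm.toLinearMap
      ∘ₗ LinearMap.lTensor H (TensorProduct.comm k B H).toLinearMap
      ∘ₗ (TensorProduct.assoc k H B H).toLinearMap)
    ∘ₗ TensorProduct.mk k (H ⊗[k] B) H u

/-- Given `u = Σ bᵢ ⊗ xᵢ ∈ B ⊗ H` and `ε : H → k`, the linear map `g ↦ Σ ε(g * xᵢ) • bᵢ`. -/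
def coPiR (B : Type*) [AddCommGroup B] [Module k B] (ε : H →ₗ[k] k) (u : B ⊗[k] H) :
    H →ₗ[k] B :=
  ((TensorProduct.rid k B).toLinearMap
      ∘ₗ LinearMap.lTensor B (ε ∘ₗ LinearMap.mul' k H ∘ₗ (TensorProduct.comm k H H).toLinearMap)
      ∘ₗ (TensorProduct.assoc k B H H).toLinearMap)
    ∘ₗ TensorProduct.mk k (B ⊗[k] H) H u

variable (Δ : H →ₗ[k] H ⊗[k] H) (ε : H →ₗ[k] k)

/-- `Π^L(g) = ε(1₍₁₎ g) • 1₍₂₎`. -/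
def PiL : H →ₗ[k] H := coPi k H H ε (Δ 1)

/-- `Π^R(g) = ε(g 1₍₂₎) • 1₍₁₎`. -/
def PiR : H →ₗ[k] H := coPiR k H H ε (Δ 1)

/-- the map `h₍₁₎ ε(g h₍₂₎)` as a function of the input of `Δ`, i.e.
`u = Σ aᵢ ⊗ bᵢ ↦ Σ ε(g bᵢ) • aᵢ`. -/
def PiRmap (g : H) : H ⊗[k] H →ₗ[k] H :=
  (TensorProduct.rid k H).toLinearMap ∘ₗ LinearMap.lTensor H (ε ∘ₗ LinearMap.mulLeft k g)

/-- `(a ⊗ b) ↦ ε(x a) * ε(b z)`. -/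
def eps2 (x z : H) : H ⊗[k] H →ₗ[k] k :=
  (TensorProduct.lid k k).toLinearMap
    ∘ₗ TensorProduct.map (ε ∘ₗ LinearMap.mulLeft k x) (ε ∘ₗ LinearMap.mulRight k z)

/-- `(a ⊗ b) ↦ ε(a z) * ε(x b)`. -/
def eps2' (x z : H) : H ⊗[k] H →ₗ[k] k :=
  (TensorProduct.lid k k).toLinearMap
    ∘ₗ TensorProduct.map (ε ∘ₗ LinearMap.mulRight k z) (ε ∘ₗ LinearMap.mulLeft k x)

/-- The weak bialgebra axioms for `(H, ·, Δ, ε)`: `Δ` is a multiplicative coassociative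
counital coproduct, the weak counit axiom
`ε(xyz) = ε(x y₍₁₎) ε(y₍₂₎ z) = ε(x y₍₂₎) ε(y₍₁₎ z)` holds, and the weak unit axiom
`(Δ ⊗ id)Δ(1) = (Δ(1) ⊗ 1)(1 ⊗ Δ(1)) = (1 ⊗ Δ(1))(Δ(1) ⊗ 1)` holds. -/
def IsWeakBialgebra : Prop :=
  (∀ x y : H, Δ (x * y) = Δ x * Δ y) ∧
  (∀ h : H, (TensorProduct.assoc k H H H) ((LinearMap.rTensor H Δ) (Δ h)) =
      (LinearMap.lTensor H Δ) (Δ h)) ∧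
  (∀ h : H, (TensorProduct.lid k H) ((LinearMap.rTensor H ε) (Δ h)) = h) ∧
  (∀ h : H, (TensorProduct.rid k H) ((LinearMap.lTensor H ε) (Δ h)) = h) ∧
  (∀ x y z : H, ε (x * y * z) = eps2 k H ε x z (Δ y)) ∧
  (∀ x y z : H, ε (x * y * z) = eps2' k H ε x z (Δ y)) ∧
  ((LinearMap.lTensor H Δ) (Δ 1) =
      (TensorProduct.assoc k H H H) ((Δ 1) ⊗ₜ[k] (1 : H)) * ((1 : H) ⊗ₜ[k] (Δ 1))) ∧
  ((LinearMap.lTensor H Δ) (Δ 1) =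
      ((1 : H) ⊗ₜ[k] (Δ 1)) * (TensorProduct.assoc k H H H) ((Δ 1) ⊗ₜ[k] (1 : H)))

variable (S : H →ₗ[k] H)

/-- The weak Hopf algebra axioms: `H` is a weak bialgebra with antipode `S` satisfying
`h₍₁₎ S(h₍₂₎) = Π^L(h)`, `S(h₍₁₎) h₍₂₎ = Π^R(h)` and `S(h₍₁₎) h₍₂₎ S(h₍₃₎) = S(h)`. -/
def IsWeakHopf : Prop :=
  IsWeakBialgebra k H Δ ε ∧
  (∀ h : H, LinearMap.mul' k H ((LinearMap.lTensor H S) (Δ h)) = PiL k H Δ ε h) ∧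
  (∀ h : H, LinearMap.mul' k H ((LinearMap.rTensor H S) (Δ h)) = PiR k H Δ ε h) ∧
  (∀ h : H,
    (LinearMap.mul' k H ∘ₗ LinearMap.lTensor H (LinearMap.mul' k H))
        ((TensorProduct.map S (TensorProduct.map LinearMap.id S))
          ((LinearMap.lTensor H Δ) (Δ h))) = S h)

end DK
end
noncomputable section
namespace DK
open TensorProduct LinearMap

variable (k : Type*) [CommRing k] (H : Type*) [Ring H] [Algebra k H]
  (Δ : H →ₗ[k] H ⊗[k] H) (ε : H →ₗ[k] k)
  (A : Type*) [Ring A] [Algebra k A] (ρ : A →ₗ[k] H ⊗[k] A)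

/-- `1₂ ⊗ (1₋₁ ⊗ 1₀) ↦ 1₋₁ 1₂ ⊗ 1₀` (used in the weak unit axiom). -/
def innerW : H ⊗[k] (H ⊗[k] A) →ₗ[k] H ⊗[k] A :=
  LinearMap.rTensor A (LinearMap.mul' k H ∘ₗ (TensorProduct.comm k H H).toLinearMap) ∘ₗ
    (TensorProduct.assoc k H H A).symm.toLinearMap

/-- `(A, ρ)` is a left weak `H`-comodule algebra: a coassociative counital left
`H`-comodule and an algebra with `ρ(a)ρ(b) = ρ(ab)` and
`(H ⊗ ρ)ρ(1) = 1₍₁₎ ⊗ 1₍₋₁₎1₍₂₎ ⊗ 1₍₀₎`. -/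
def IsWeakComoduleAlgebra : Prop :=
  (∀ a : A, (TensorProduct.assoc k H H A) ((LinearMap.rTensor A Δ) (ρ a)) =
      (LinearMap.lTensor H ρ) (ρ a)) ∧
  (∀ a : A, (TensorProduct.lid k A) ((LinearMap.rTensor A ε) (ρ a)) = a) ∧
  (∀ a b : A, ρ (a * b) = ρ a * ρ b) ∧
  ((LinearMap.lTensor H ρ) (ρ 1) =
    (LinearMap.lTensor H (innerW k H A))
      ((TensorProduct.assoc k H H (H ⊗[k] A)) ((Δ 1) ⊗ₜ[k] (ρ 1))))

/-- The source map `s_A : h ↦ ε(1₍₋₁₎ h) 1₍₀₎`, i.e. `s_A(Π^L h) = ε(1₍₋₁₎ h) 1₍₀₎`. -/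
def sAlin : H →ₗ[k] A := coPi k H A ε (ρ 1)

end DK
end


noncomputable section
namespace WP
open TensorProduct LinearMap
set_option maxHeartbeats 1000000
set_option synthInstance.maxHeartbeats 200000

variable {k : Type*} [CommRing k] {H : Type*} [Ring H] [Algebra k H]

/-- contract the first tensor leg with a functional. -/
def ctr1 (M : Type*) [AddCommGroup M] [Module k M] (f : H →ₗ[k] k) :
    H ⊗[k] M →ₗ[k] M :=
  (TensorProduct.lid k M).toLinearMap ∘ₗ LinearMap.rTensor M f

/-- contract the second tensor leg with a functional. -/
def ctr2 (f : H →ₗ[k] k) : H ⊗[k] H →ₗ[k] H :=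
  (TensorProduct.rid k H).toLinearMap ∘ₗ LinearMap.lTensor H f

@[simp] lemma ctr1_tmul (M : Type*) [AddCommGroup M] [Module k M] (f : H →ₗ[k] k)
    (x : H) (m : M) : ctr1 M f (x ⊗ₜ[k] m) = f x • m := by
  simp [ctr1]

@[simp] lemma ctr2_tmul (f : H →ₗ[k] k) (x y : H) : ctr2 f (x ⊗ₜ[k] y) = f y • x := by
  simp [ctr2]

/-- `(a⊗b)⊗(c⊗d) ↦ μ(b⊗c) • (a⊗d)`. -/
def sw (M : Type*) [AddCommGroup M] [Module k M] (μ : H ⊗[k] H →ₗ[k] k) :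
    (H ⊗[k] H) ⊗[k] (H ⊗[k] M) →ₗ[k] H ⊗[k] M :=
  LinearMap.lTensor H
      ((TensorProduct.lid k M).toLinearMap ∘ₗ LinearMap.rTensor M μ
        ∘ₗ (TensorProduct.assoc k H H M).symm.toLinearMap)
    ∘ₗ (TensorProduct.assoc k H H (H ⊗[k] M)).toLinearMap

@[simp] lemma sw_tmul (M : Type*) [AddCommGroup M] [Module k M] (μ : H ⊗[k] H →ₗ[k] k)
    (a b c : H) (d : M) :
    sw M μ ((a ⊗ₜ[k] b) ⊗ₜ[k] (c ⊗ₜ[k] d)) = μ (b ⊗ₜ[k] c) • (a ⊗ₜ[k] d) := by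
  simp [sw]

/-- `(x⊗y)⊗(p⊗(m⊗q)) ↦ μ(y⊗m) • ((x*p)⊗q)`. -/
def swm (μ : H ⊗[k] H →ₗ[k] k) :
    (H ⊗[k] H) ⊗[k] (H ⊗[k] (H ⊗[k] H)) →ₗ[k] H ⊗[k] H :=
  sw H (μ ∘ₗ (TensorProduct.comm k H H).toLinearMap)
    ∘ₗ LinearMap.rTensor (H ⊗[k] H)
        (LinearMap.rTensor H (LinearMap.mul' k H) ∘ₗ (TensorProduct.assoc k H H H).symm.toLinearMap)
    ∘ₗ (TensorProduct.tensorTensorTensorComm k H H (H ⊗[k] H) H).toLinearMap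
    ∘ₗ LinearMap.lTensor (H ⊗[k] H) ((TensorProduct.assoc k H H H).symm.toLinearMap)

@[simp] lemma swm_tmul (μ : H ⊗[k] H →ₗ[k] k) (x y p m q : H) :
    swm μ ((x ⊗ₜ[k] y) ⊗ₜ[k] (p ⊗ₜ[k] (m ⊗ₜ[k] q))) = μ (y ⊗ₜ[k] m) • ((x * p) ⊗ₜ[k] q) := by
  simp [swm]

/-- `(x⊗y)⊗(p⊗(m⊗q)) ↦ μ(m⊗y) • ((p*x)⊗q)`. -/
def swm3 (μ : H ⊗[k] H →ₗ[k] k) :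
    (H ⊗[k] H) ⊗[k] (H ⊗[k] (H ⊗[k] H)) →ₗ[k] H ⊗[k] H :=
  sw H μ
    ∘ₗ LinearMap.rTensor (H ⊗[k] H)
        (LinearMap.rTensor H (LinearMap.mul' k H ∘ₗ (TensorProduct.comm k H H).toLinearMap)
          ∘ₗ (TensorProduct.assoc k H H H).symm.toLinearMap)
    ∘ₗ (TensorProduct.tensorTensorTensorComm k H H (H ⊗[k] H) H).toLinearMap
    ∘ₗ LinearMap.lTensor (H ⊗[k] H) ((TensorProduct.assoc k H H H).symm.toLinearMap)

@[simp] lemma swm3_tmul (μ : H ⊗[k] H →ₗ[k] k) (x y p m q : H) :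
    swm3 μ ((x ⊗ₜ[k] y) ⊗ₜ[k] (p ⊗ₜ[k] (m ⊗ₜ[k] q))) = μ (m ⊗ₜ[k] y) • ((p * x) ⊗ₜ[k] q) := by
  simp [swm3]

section Balg
variable (B : Type*) [Ring B] [Algebra k B]

/-- `(x⊗c)⊗(a⊗(m⊗d)) ↦ μ(x⊗m) • (a⊗(c*d))`. -/
def swm2 (μ : H ⊗[k] H →ₗ[k] k) :
    (H ⊗[k] B) ⊗[k] (H ⊗[k] (H ⊗[k] B)) →ₗ[k] H ⊗[k] B :=
  TensorProduct.map
      ((TensorProduct.lid k H).toLinearMap ∘ₗ LinearMap.rTensor H μ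
        ∘ₗ (TensorProduct.assoc k H H H).symm.toLinearMap
        ∘ₗ LinearMap.lTensor H (TensorProduct.comm k H H).toLinearMap)
      (LinearMap.mul' k B)
    ∘ₗ (TensorProduct.tensorTensorTensorComm k H B (H ⊗[k] H) B).toLinearMap
    ∘ₗ LinearMap.lTensor (H ⊗[k] B) ((TensorProduct.assoc k H H B).symm.toLinearMap)

@[simp] lemma swm2_tmul (μ : H ⊗[k] H →ₗ[k] k) (x : H) (c : B) (a m : H) (d : B) :
    swm2 B μ ((x ⊗ₜ[k] c) ⊗ₜ[k] (a ⊗ₜ[k] (m ⊗ₜ[k] d))) = μ (x ⊗ₜ[k] m) • (a ⊗ₜ[k] (c * d)) := by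
  simp [swm2, TensorProduct.smul_tmul']

/-- `(x⊗c)⊗(a⊗(m⊗d)) ↦ μ(m⊗x) • (a⊗(d*c))`. -/
def swm4 (μ : H ⊗[k] H →ₗ[k] k) :
    (H ⊗[k] B) ⊗[k] (H ⊗[k] (H ⊗[k] B)) →ₗ[k] H ⊗[k] B :=
  TensorProduct.map
      ((TensorProduct.lid k H).toLinearMap
        ∘ₗ LinearMap.rTensor H (μ ∘ₗ (TensorProduct.comm k H H).toLinearMap)
        ∘ₗ (TensorProduct.assoc k H H H).symm.toLinearMap
        ∘ₗ LinearMap.lTensor H (TensorProduct.comm k H H).toLinearMap)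
      (LinearMap.mul' k B ∘ₗ (TensorProduct.comm k B B).toLinearMap)
    ∘ₗ (TensorProduct.tensorTensorTensorComm k H B (H ⊗[k] H) B).toLinearMap
    ∘ₗ LinearMap.lTensor (H ⊗[k] B) ((TensorProduct.assoc k H H B).symm.toLinearMap)

@[simp] lemma swm4_tmul (μ : H ⊗[k] H →ₗ[k] k) (x : H) (c : B) (a m : H) (d : B) :
    swm4 B μ ((x ⊗ₜ[k] c) ⊗ₜ[k] (a ⊗ₜ[k] (m ⊗ₜ[k] d))) = μ (m ⊗ₜ[k] x) • (a ⊗ₜ[k] (d * c)) := by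
  simp [swm4, TensorProduct.smul_tmul']

end Balg

/-- `(a⊗b)⊗(c⊗d) ↦ a⊗((b*c)⊗d)`. -/
def Gm (M : Type*) [AddCommGroup M] [Module k M] :
    (H ⊗[k] H) ⊗[k] (H ⊗[k] M) →ₗ[k] H ⊗[k] (H ⊗[k] M) :=
  LinearMap.lTensor H
      (LinearMap.rTensor M (LinearMap.mul' k H) ∘ₗ (TensorProduct.assoc k H H M).symm.toLinearMap)
    ∘ₗ (TensorProduct.assoc k H H (H ⊗[k] M)).toLinearMap

@[simp] lemma Gm_tmul (M : Type*) [AddCommGroup M] [Module k M] (a b c : H) (d : M) :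
    Gm M ((a ⊗ₜ[k] b) ⊗ₜ[k] (c ⊗ₜ[k] d)) = a ⊗ₜ[k] ((b * c) ⊗ₜ[k] d) := by
  simp [Gm]

/-- `(a⊗b)⊗(c⊗d) ↦ a⊗((c*b)⊗d)`. -/
def Gm' (M : Type*) [AddCommGroup M] [Module k M] :
    (H ⊗[k] H) ⊗[k] (H ⊗[k] M) →ₗ[k] H ⊗[k] (H ⊗[k] M) :=
  LinearMap.lTensor H
      (LinearMap.rTensor M (LinearMap.mul' k H ∘ₗ (TensorProduct.comm k H H).toLinearMap)
        ∘ₗ (TensorProduct.assoc k H H M).symm.toLinearMap)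
    ∘ₗ (TensorProduct.assoc k H H (H ⊗[k] M)).toLinearMap

@[simp] lemma Gm'_tmul (M : Type*) [AddCommGroup M] [Module k M] (a b c : H) (d : M) :
    Gm' M ((a ⊗ₜ[k] b) ⊗ₜ[k] (c ⊗ₜ[k] d)) = a ⊗ₜ[k] ((c * b) ⊗ₜ[k] d) := by
  simp [Gm']


section Shapes

variable (ε : H →ₗ[k] k)

@[simp] lemma ctr1_apply (M : Type*) [AddCommGroup M] [Module k M] (f : H →ₗ[k] k)
    (u : H ⊗[k] M) : ctr1 M f u = (TensorProduct.lid k M) (LinearMap.rTensor M f u) := rfl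

@[simp] lemma ctr2_apply (f : H →ₗ[k] k) (u : H ⊗[k] H) :
    ctr2 f u = (TensorProduct.rid k H) (LinearMap.lTensor H f u) := rfl

lemma shapeA (u v : H ⊗[k] H) :
    (TensorProduct.assoc k H H H) (u ⊗ₜ[k] (1 : H)) * ((1 : H) ⊗ₜ[k] v) = Gm H (u ⊗ₜ[k] v) := by
  induction u using TensorProduct.induction_on with
  | zero => simp [zero_tmul]
  | add u₁ u₂ h1 h2 => simp only [add_tmul, map_add, add_mul, h1, h2]
  | tmul a b =>
    induction v using TensorProduct.induction_on with
    | zero => simp [tmul_zero]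
    | add v₁ v₂ h1 h2 => simp only [tmul_add, map_add, mul_add, h1, h2]
    | tmul c d => simp [Algebra.TensorProduct.tmul_mul_tmul]

lemma shapeB (u v : H ⊗[k] H) :
    ((1 : H) ⊗ₜ[k] v) * (TensorProduct.assoc k H H H) (u ⊗ₜ[k] (1 : H)) = Gm' H (u ⊗ₜ[k] v) := by
  induction u using TensorProduct.induction_on with
  | zero => simp [zero_tmul]
  | add u₁ u₂ h1 h2 => simp only [add_tmul, map_add, mul_add, h1, h2]
  | tmul a b =>
    induction v using TensorProduct.induction_on with
    | zero => simp [tmul_zero]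
    | add v₁ v₂ h1 h2 => simp only [tmul_add, map_add, add_mul, h1, h2]
    | tmul c d => simp [Algebra.TensorProduct.tmul_mul_tmul]

variable {A : Type*} [Ring A] [Algebra k A]

lemma shapeRho (u : H ⊗[k] H) (v : H ⊗[k] A) :
    LinearMap.lTensor H (DK.innerW k H A) ((TensorProduct.assoc k H H (H ⊗[k] A)) (u ⊗ₜ[k] v)) =
      Gm' A (u ⊗ₜ[k] v) := by
  induction u using TensorProduct.induction_on with
  | zero => simp [zero_tmul]
  | add u₁ u₂ h1 h2 => simp only [add_tmul, map_add, h1, h2]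
  | tmul a b =>
    induction v using TensorProduct.induction_on with
    | zero => simp [tmul_zero]
    | add v₁ v₂ h1 h2 => simp only [tmul_add, map_add, h1, h2]
    | tmul c d => simp [DK.innerW]

lemma step2K (t v u : H ⊗[k] H) :
    sw H (ε ∘ₗ LinearMap.mul' k H) ((t * v) ⊗ₜ[k] u) =
      swm (ε ∘ₗ LinearMap.mul' k H) (t ⊗ₜ[k] Gm H (v ⊗ₜ[k] u)) := by
  induction t using TensorProduct.induction_on with
  | zero => simp [zero_tmul]
  | add t₁ t₂ h1 h2 => simp only [add_mul, add_tmul, map_add, h1, h2]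
  | tmul x y =>
    induction v using TensorProduct.induction_on with
    | zero => simp [zero_tmul]
    | add v₁ v₂ h1 h2 => simp only [mul_add, add_tmul, tmul_add, map_add, h1, h2]
    | tmul c d =>
      induction u using TensorProduct.induction_on with
      | zero => simp [tmul_zero]
      | add u₁ u₂ h1 h2 => simp only [tmul_add, map_add, h1, h2]
      | tmul p q => simp [Algebra.TensorProduct.tmul_mul_tmul, mul_assoc]

lemma step2Ko (t v u : H ⊗[k] H) :
    sw H (ε ∘ₗ LinearMap.mul' k H ∘ₗ (TensorProduct.comm k H H).toLinearMap) ((v * t) ⊗ₜ[k] u) =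
      swm3 (ε ∘ₗ LinearMap.mul' k H) (t ⊗ₜ[k] Gm' H (v ⊗ₜ[k] u)) := by
  induction t using TensorProduct.induction_on with
  | zero => simp [zero_tmul]
  | add t₁ t₂ h1 h2 => simp only [mul_add, add_tmul, map_add, h1, h2]
  | tmul x y =>
    induction v using TensorProduct.induction_on with
    | zero => simp [zero_tmul]
    | add v₁ v₂ h1 h2 => simp only [add_mul, add_tmul, tmul_add, map_add, h1, h2]
    | tmul c d =>
      induction u using TensorProduct.induction_on with
      | zero => simp [tmul_zero]
      | add u₁ u₂ h1 h2 => simp only [tmul_add, map_add, h1, h2]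
      | tmul p q => simp [Algebra.TensorProduct.tmul_mul_tmul, mul_assoc]

section B2
variable (B : Type*) [Ring B] [Algebra k B]

lemma step2Kc (t v : H ⊗[k] B) (u : H ⊗[k] H) :
    sw B (ε ∘ₗ LinearMap.mul' k H ∘ₗ (TensorProduct.comm k H H).toLinearMap) (u ⊗ₜ[k] (t * v)) =
      swm2 B (ε ∘ₗ LinearMap.mul' k H) (t ⊗ₜ[k] Gm' B (u ⊗ₜ[k] v)) := by
  induction t using TensorProduct.induction_on with
  | zero => simp [tmul_zero, zero_mul]
  | add t₁ t₂ h1 h2 => simp only [add_mul, add_tmul, tmul_add, map_add, h1, h2]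
  | tmul x c =>
    induction v using TensorProduct.induction_on with
    | zero => simp [tmul_zero, mul_zero]
    | add v₁ v₂ h1 h2 => simp only [mul_add, tmul_add, map_add, h1, h2]
    | tmul y d =>
      induction u using TensorProduct.induction_on with
      | zero => simp [zero_tmul]
      | add u₁ u₂ h1 h2 => simp only [add_tmul, tmul_add, map_add, h1, h2]
      | tmul a b => simp [Algebra.TensorProduct.tmul_mul_tmul, mul_assoc]

lemma step2Koc (t v : H ⊗[k] B) (u : H ⊗[k] H) :
    sw B (ε ∘ₗ LinearMap.mul' k H) (u ⊗ₜ[k] (v * t)) =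
      swm4 B (ε ∘ₗ LinearMap.mul' k H) (t ⊗ₜ[k] Gm B (u ⊗ₜ[k] v)) := by
  induction t using TensorProduct.induction_on with
  | zero => simp [tmul_zero, mul_zero]
  | add t₁ t₂ h1 h2 => simp only [mul_add, add_tmul, tmul_add, map_add, h1, h2]
  | tmul x c =>
    induction v using TensorProduct.induction_on with
    | zero => simp [tmul_zero, zero_mul]
    | add v₁ v₂ h1 h2 => simp only [add_mul, tmul_add, map_add, h1, h2]
    | tmul y d =>
      induction u using TensorProduct.induction_on with
      | zero => simp [zero_tmul]
      | add u₁ u₂ h1 h2 => simp only [add_tmul, tmul_add, map_add, h1, h2]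
      | tmul a b => simp [Algebra.TensorProduct.tmul_mul_tmul, mul_assoc]

lemma st3Kc (t : H ⊗[k] B) (X : H ⊗[k] (H ⊗[k] B)) :
    swm2 B (ε ∘ₗ LinearMap.mul' k H) (t ⊗ₜ[k] X) =
      LinearMap.lTensor H (ctr1 B ε ∘ₗ LinearMap.mulLeft k t) X := by
  induction X using TensorProduct.induction_on with
  | zero => simp [tmul_zero]
  | add X₁ X₂ h1 h2 => simp only [tmul_add, map_add, h1, h2]
  | tmul a Y =>
    simp only [LinearMap.lTensor_tmul, LinearMap.comp_apply, LinearMap.mulLeft_apply]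
    induction Y using TensorProduct.induction_on with
    | zero => simp [tmul_zero]
    | add Y₁ Y₂ h1 h2 => simp only [tmul_add, map_add, mul_add, h1, h2]
    | tmul m d =>
      induction t using TensorProduct.induction_on with
      | zero => simp [zero_tmul, zero_mul]
      | add t₁ t₂ h1 h2 => simp only [add_tmul, map_add, add_mul, tmul_add, h1, h2]
      | tmul x c => simp [Algebra.TensorProduct.tmul_mul_tmul]

lemma st3Koc (t : H ⊗[k] B) (X : H ⊗[k] (H ⊗[k] B)) :
    swm4 B (ε ∘ₗ LinearMap.mul' k H) (t ⊗ₜ[k] X) =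
      LinearMap.lTensor H (ctr1 B ε ∘ₗ LinearMap.mulRight k t) X := by
  induction X using TensorProduct.induction_on with
  | zero => simp [tmul_zero]
  | add X₁ X₂ h1 h2 => simp only [tmul_add, map_add, h1, h2]
  | tmul a Y =>
    simp only [LinearMap.lTensor_tmul, LinearMap.comp_apply, LinearMap.mulRight_apply]
    induction Y using TensorProduct.induction_on with
    | zero => simp [tmul_zero]
    | add Y₁ Y₂ h1 h2 => simp only [tmul_add, map_add, add_mul, h1, h2]
    | tmul m d =>
      induction t using TensorProduct.induction_on with
      | zero => simp [tmul_zero, mul_zero]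
      | add t₁ t₂ h1 h2 => simp only [add_tmul, map_add, mul_add, tmul_add, h1, h2]
      | tmul x c => simp [Algebra.TensorProduct.tmul_mul_tmul]

end B2

lemma swm_assoc (t s : H ⊗[k] H) (q : H) :
    swm (ε ∘ₗ LinearMap.mul' k H) (t ⊗ₜ[k] ((TensorProduct.assoc k H H H) (s ⊗ₜ[k] q))) =
      (ctr2 ε (t * s)) ⊗ₜ[k] q := by
  induction t using TensorProduct.induction_on with
  | zero => simp [zero_tmul, zero_mul]
  | add t₁ t₂ h1 h2 => simp only [add_tmul, map_add, add_mul, h1, h2]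
  | tmul x y =>
    induction s using TensorProduct.induction_on with
    | zero => simp [zero_tmul, mul_zero]
    | add s₁ s₂ h1 h2 => simp only [add_tmul, map_add, tmul_add, mul_add, h1, h2]
    | tmul a b =>
      simp [Algebra.TensorProduct.tmul_mul_tmul, TensorProduct.smul_tmul']

lemma swm3_assoc (t s : H ⊗[k] H) (q : H) :
    swm3 (ε ∘ₗ LinearMap.mul' k H) (t ⊗ₜ[k] ((TensorProduct.assoc k H H H) (s ⊗ₜ[k] q))) =
      (ctr2 ε (s * t)) ⊗ₜ[k] q := by
  induction t using TensorProduct.induction_on with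
  | zero => simp [zero_tmul, mul_zero]
  | add t₁ t₂ h1 h2 => simp only [add_tmul, map_add, mul_add, h1, h2]
  | tmul x y =>
    induction s using TensorProduct.induction_on with
    | zero => simp [zero_tmul, zero_mul]
    | add s₁ s₂ h1 h2 => simp only [add_tmul, map_add, tmul_add, add_mul, h1, h2]
    | tmul a b =>
      simp [Algebra.TensorProduct.tmul_mul_tmul, TensorProduct.smul_tmul']

variable (Δ : H →ₗ[k] H ⊗[k] H)

lemma st3K (t : H ⊗[k] H) (u : H ⊗[k] H) :
    swm (ε ∘ₗ LinearMap.mul' k H) (t ⊗ₜ[k] ((TensorProduct.assoc k H H H) (LinearMap.rTensor H Δ u))) =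
      LinearMap.rTensor H (ctr2 ε ∘ₗ LinearMap.mulLeft k t ∘ₗ Δ) u := by
  induction u using TensorProduct.induction_on with
  | zero => simp [tmul_zero]
  | add u₁ u₂ h1 h2 => simp only [map_add, tmul_add, h1, h2]
  | tmul x q =>
    simp only [LinearMap.rTensor_tmul, LinearMap.comp_apply, LinearMap.mulLeft_apply]
    exact swm_assoc ε t (Δ x) q

lemma st3Ko (t : H ⊗[k] H) (u : H ⊗[k] H) :
    swm3 (ε ∘ₗ LinearMap.mul' k H) (t ⊗ₜ[k] ((TensorProduct.assoc k H H H) (LinearMap.rTensor H Δ u))) =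
      LinearMap.rTensor H (ctr2 ε ∘ₗ LinearMap.mulRight k t ∘ₗ Δ) u := by
  induction u using TensorProduct.induction_on with
  | zero => simp [tmul_zero]
  | add u₁ u₂ h1 h2 => simp only [map_add, tmul_add, h1, h2]
  | tmul x q =>
    simp only [LinearMap.rTensor_tmul, LinearMap.comp_apply, LinearMap.mulRight_apply]
    exact swm3_assoc ε t (Δ x) q

end Shapes

section Glue

variable (ε : H →ₗ[k] k)

lemma coPi_eval (B : Type*) [AddCommGroup B] [Module k B] (u : H ⊗[k] B) (g : H) :
    DK.coPi k H B ε u g = ctr1 B (ε ∘ₗ LinearMap.mulRight k g) u := by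
  induction u using TensorProduct.induction_on with
  | zero =>
    simp [DK.coPi, TensorProduct.zero_tmul]
  | add u₁ u₂ h1 h2 =>
    simp only [DK.coPi, LinearMap.comp_apply, TensorProduct.mk_apply] at h1 h2 ⊢
    rw [TensorProduct.add_tmul]
    simp only [map_add, h1, h2]
  | tmul x b =>
    simp [DK.coPi, mul_comm]

lemma eps2_eval (x g : H) (u : H ⊗[k] H) :
    DK.eps2 k H ε x g u = ε (x * ctr2 (ε ∘ₗ LinearMap.mulRight k g) u) := by
  induction u using TensorProduct.induction_on with
  | zero => simp [DK.eps2]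
  | add u₁ u₂ h1 h2 => simp only [map_add, mul_add, h1, h2]
  | tmul c d =>
    simp [DK.eps2, mul_smul_comm, smul_eq_mul, mul_comm]

lemma eps2'_eval (x g : H) (u : H ⊗[k] H) :
    DK.eps2' k H ε x g u = ε (x * ctr1 H (ε ∘ₗ LinearMap.mulRight k g) u) := by
  induction u using TensorProduct.induction_on with
  | zero => simp [DK.eps2']
  | add u₁ u₂ h1 h2 => simp only [map_add, mul_add, h1, h2]
  | tmul c d =>
    simp [DK.eps2', mul_smul_comm, smul_eq_mul, mul_comm]

/-- the linear map `g ↦ Σ ε(u₂ g) • u₁`. -/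
def QlinOf (u : H ⊗[k] H) : H →ₗ[k] H :=
  (TensorProduct.rid k H).toLinearMap ∘ₗ LinearMap.lTensor H (ε ∘ₗ LinearMap.mul' k H)
    ∘ₗ (TensorProduct.assoc k H H H).toLinearMap ∘ₗ TensorProduct.mk k (H ⊗[k] H) H u

lemma QlinOf_apply (u : H ⊗[k] H) (g : H) :
    QlinOf ε u g = ctr2 (ε ∘ₗ LinearMap.mulRight k g) u := by
  induction u using TensorProduct.induction_on with
  | zero => simp [QlinOf, TensorProduct.zero_tmul]
  | add u₁ u₂ h1 h2 =>
    simp only [QlinOf, LinearMap.comp_apply, TensorProduct.mk_apply] at h1 h2 ⊢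
    rw [TensorProduct.add_tmul]
    simp only [map_add, h1, h2]
  | tmul a b => simp [QlinOf]

lemma rT_Qlin (v u : H ⊗[k] H) :
    LinearMap.rTensor H (QlinOf ε v) u = sw H (ε ∘ₗ LinearMap.mul' k H) (v ⊗ₜ[k] u) := by
  induction u using TensorProduct.induction_on with
  | zero => simp [tmul_zero]
  | add u₁ u₂ h1 h2 => simp only [map_add, tmul_add, h1, h2]
  | tmul x y =>
    rw [LinearMap.rTensor_tmul, QlinOf_apply]
    induction v using TensorProduct.induction_on with
    | zero => simp [zero_tmul]
    | add v₁ v₂ h1 h2 => simp only [map_add, add_tmul, h1, h2]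
    | tmul a b => simp [TensorProduct.smul_tmul']

lemma lT_coPi (B : Type*) [AddCommGroup B] [Module k B] (v : H ⊗[k] B) (u : H ⊗[k] H) :
    LinearMap.lTensor H (DK.coPi k H B ε v) u =
      sw B (ε ∘ₗ LinearMap.mul' k H ∘ₗ (TensorProduct.comm k H H).toLinearMap) (u ⊗ₜ[k] v) := by
  induction u using TensorProduct.induction_on with
  | zero => simp [zero_tmul]
  | add u₁ u₂ h1 h2 => simp only [map_add, add_tmul, h1, h2]
  | tmul x y =>
    rw [LinearMap.lTensor_tmul, coPi_eval]
    induction v using TensorProduct.induction_on with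
    | zero => simp [tmul_zero]
    | add v₁ v₂ h1 h2 => simp only [map_add, tmul_add, h1, h2]
    | tmul a b => simp

lemma Z1glue (g : H) (v u : H ⊗[k] H) :
    LinearMap.rTensor H (QlinOf ε v ∘ₗ LinearMap.mulRight k g) u =
      LinearMap.lTensor H (ctr1 H (ε ∘ₗ LinearMap.mulRight k g)) (Gm H (v ⊗ₜ[k] u)) := by
  induction u using TensorProduct.induction_on with
  | zero => simp [tmul_zero]
  | add u₁ u₂ h1 h2 => simp only [map_add, tmul_add, h1, h2]
  | tmul x z =>
    rw [LinearMap.rTensor_tmul, LinearMap.comp_apply, LinearMap.mulRight_apply, QlinOf_apply]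
    induction v using TensorProduct.induction_on with
    | zero => simp [zero_tmul]
    | add v₁ v₂ h1 h2 => simp only [map_add, add_tmul, h1, h2]
    | tmul a b => simp [TensorProduct.smul_tmul', mul_assoc]

lemma assoc_contract (M : Type*) [AddCommGroup M] [Module k M] (f : H →ₗ[k] k)
    (s : H ⊗[k] H) (c : M) :
    LinearMap.lTensor H (ctr1 M f) ((TensorProduct.assoc k H H M) (s ⊗ₜ[k] c)) =
      (ctr2 f s) ⊗ₜ[k] c := by
  induction s using TensorProduct.induction_on with
  | zero => simp [zero_tmul]
  | add s₁ s₂ h1 h2 => simp only [map_add, add_tmul, h1, h2]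
  | tmul a b => simp [TensorProduct.smul_tmul']

variable (Δ : H →ₗ[k] H ⊗[k] H)

lemma contract_coassoc (M : Type*) [AddCommGroup M] [Module k M] (f : H →ₗ[k] k)
    (u : H ⊗[k] M) :
    LinearMap.lTensor H (ctr1 M f) ((TensorProduct.assoc k H H M) (LinearMap.rTensor M Δ u)) =
      LinearMap.rTensor M (ctr2 f ∘ₗ Δ) u := by
  induction u using TensorProduct.induction_on with
  | zero => simp
  | add u₁ u₂ h1 h2 => simp only [map_add, h1, h2]
  | tmul x c =>
    rw [LinearMap.rTensor_tmul, LinearMap.rTensor_tmul, LinearMap.comp_apply]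
    exact assoc_contract M f (Δ x) c

lemma ctr2_rTensor (f : H →ₗ[k] k) (m : H →ₗ[k] H) (u : H ⊗[k] H) :
    ctr2 f (LinearMap.rTensor H m u) = m (ctr2 f u) := by
  induction u using TensorProduct.induction_on with
  | zero => simp
  | add u₁ u₂ h1 h2 => simp only [map_add, h1, h2]
  | tmul a b => simp

lemma ctr1_lTensor (M : Type*) [AddCommGroup M] [Module k M] (f : H →ₗ[k] k)
    (m : M →ₗ[k] M) (u : H ⊗[k] M) :
    ctr1 M f (LinearMap.lTensor H m u) = m (ctr1 M f u) := by
  induction u using TensorProduct.induction_on with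
  | zero => simp
  | add u₁ u₂ h1 h2 => simp only [map_add, h1, h2]
  | tmul a b => simp

lemma mSid_mulRight (S : H →ₗ[k] H) (h : H) (u : H ⊗[k] H) :
    LinearMap.mul' k H (LinearMap.rTensor H S (LinearMap.lTensor H (LinearMap.mulRight k h) u)) =
      LinearMap.mul' k H (LinearMap.rTensor H S u) * h := by
  induction u using TensorProduct.induction_on with
  | zero => simp
  | add u₁ u₂ h1 h2 => simp only [map_add, add_mul, h1, h2]
  | tmul a b => simp [mul_assoc]

lemma coPiR_one (u : H ⊗[k] H) :
    DK.coPiR k H H ε u 1 = (TensorProduct.rid k H) (LinearMap.lTensor H ε u) := by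
  induction u using TensorProduct.induction_on with
  | zero => simp [DK.coPiR, TensorProduct.zero_tmul]
  | add u₁ u₂ h1 h2 =>
    simp only [DK.coPiR, LinearMap.comp_apply, TensorProduct.mk_apply] at h1 h2 ⊢
    rw [TensorProduct.add_tmul]
    simp only [map_add, h1, h2]
  | tmul b x => simp [DK.coPiR]

lemma reshD (g : H) (t u : H ⊗[k] H) :
    QlinOf ε t (ctr2 (ε ∘ₗ LinearMap.mulRight k g) u) =
      ctr2 (ε ∘ₗ LinearMap.mulRight k g) (sw H (ε ∘ₗ LinearMap.mul' k H) (t ⊗ₜ[k] u)) := by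
  induction u using TensorProduct.induction_on with
  | zero => simp [tmul_zero]
  | add u₁ u₂ h1 h2 => simp only [map_add, tmul_add, h1, h2]
  | tmul c d =>
    rw [QlinOf_apply]
    induction t using TensorProduct.induction_on with
    | zero => simp [zero_tmul]
    | add t₁ t₂ h1 h2 => simp only [map_add, add_tmul, h1, h2]
    | tmul a b =>
      simp [mul_smul_comm, smul_eq_mul, smul_smul, mul_comm]

lemma reshE {A : Type*} [Ring A] [Algebra k A] (g : H) (u : H ⊗[k] H) (t : H ⊗[k] A) :
    DK.coPi k H A ε t (ctr1 H (ε ∘ₗ LinearMap.mulRight k g) u) =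
      ctr1 A (ε ∘ₗ LinearMap.mulRight k g)
        (sw A (ε ∘ₗ LinearMap.mul' k H ∘ₗ (TensorProduct.comm k H H).toLinearMap) (u ⊗ₜ[k] t)) := by
  induction u using TensorProduct.induction_on with
  | zero => simp [zero_tmul]
  | add u₁ u₂ h1 h2 => simp only [map_add, add_tmul, h1, h2]
  | tmul a b =>
    rw [coPi_eval]
    induction t using TensorProduct.induction_on with
    | zero => simp [tmul_zero]
    | add t₁ t₂ h1 h2 => simp only [map_add, tmul_add, h1, h2]
    | tmul c d =>
      simp [mul_smul_comm, smul_eq_mul, smul_smul, mul_comm]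

end Glue

section Main

variable (ε : H →ₗ[k] k) (Δ : H →ₗ[k] H ⊗[k] H)

lemma rT2 (f g' : H →ₗ[k] H) (u : H ⊗[k] H) :
    LinearMap.rTensor H f (LinearMap.rTensor H g' u) = LinearMap.rTensor H (f ∘ₗ g') u := by
  rw [← LinearMap.comp_apply, ← LinearMap.rTensor_comp]

lemma map_lT (f : H →ₗ[k] H) (F : H ⊗[k] H →ₗ[k] H) (w : H ⊗[k] H) :
    TensorProduct.map f F (LinearMap.lTensor H Δ w) = TensorProduct.map f (F ∘ₗ Δ) w := by
  induction w using TensorProduct.induction_on with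
  | zero => simp
  | add w₁ w₂ h1 h2 => simp only [map_add, h1, h2]
  | tmul x y => simp

lemma Klem
    (hm : ∀ x y : H, Δ (x * y) = Δ x * Δ y)
    (hco : ∀ h : H, (TensorProduct.assoc k H H H) ((LinearMap.rTensor H Δ) (Δ h)) =
      (LinearMap.lTensor H Δ) (Δ h))
    (hcr : ∀ h : H, (TensorProduct.rid k H) ((LinearMap.lTensor H ε) (Δ h)) = h)
    (huA : (LinearMap.lTensor H Δ) (Δ 1) =
      (TensorProduct.assoc k H H H) ((Δ 1) ⊗ₜ[k] (1 : H)) * ((1 : H) ⊗ₜ[k] (Δ 1)))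
    (h : H) :
    sw H (ε ∘ₗ LinearMap.mul' k H) (Δ h ⊗ₜ[k] Δ 1) =
      LinearMap.rTensor H (LinearMap.mulLeft k h) (Δ 1) := by
  have e1 : Δ h = Δ h * Δ 1 := by rw [← hm, mul_one]
  calc sw H (ε ∘ₗ LinearMap.mul' k H) (Δ h ⊗ₜ[k] Δ 1)
      = sw H (ε ∘ₗ LinearMap.mul' k H) ((Δ h * Δ 1) ⊗ₜ[k] Δ 1) := by rw [← e1]
    _ = swm (ε ∘ₗ LinearMap.mul' k H) (Δ h ⊗ₜ[k] Gm H (Δ 1 ⊗ₜ[k] Δ 1)) := step2K ε _ _ _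
    _ = swm (ε ∘ₗ LinearMap.mul' k H)
          (Δ h ⊗ₜ[k] (TensorProduct.assoc k H H H) ((LinearMap.rTensor H Δ) (Δ 1))) := by
        rw [← shapeA, ← huA, ← hco 1]
    _ = LinearMap.rTensor H (ctr2 ε ∘ₗ LinearMap.mulLeft k (Δ h) ∘ₗ Δ) (Δ 1) := st3K ε Δ _ _
    _ = LinearMap.rTensor H (LinearMap.mulLeft k h) (Δ 1) := by
        have hmap : ctr2 ε ∘ₗ LinearMap.mulLeft k (Δ h) ∘ₗ Δ = LinearMap.mulLeft k h := by
          ext x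
          simp only [LinearMap.comp_apply, LinearMap.mulLeft_apply, ctr2_apply]
          rw [← hm]
          exact hcr (h * x)
        rw [hmap]

lemma Kolem
    (hm : ∀ x y : H, Δ (x * y) = Δ x * Δ y)
    (hco : ∀ h : H, (TensorProduct.assoc k H H H) ((LinearMap.rTensor H Δ) (Δ h)) =
      (LinearMap.lTensor H Δ) (Δ h))
    (hcr : ∀ h : H, (TensorProduct.rid k H) ((LinearMap.lTensor H ε) (Δ h)) = h)
    (huB : (LinearMap.lTensor H Δ) (Δ 1) =
      ((1 : H) ⊗ₜ[k] (Δ 1)) * (TensorProduct.assoc k H H H) ((Δ 1) ⊗ₜ[k] (1 : H)))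
    (h : H) :
    sw H (ε ∘ₗ LinearMap.mul' k H ∘ₗ (TensorProduct.comm k H H).toLinearMap) (Δ h ⊗ₜ[k] Δ 1) =
      LinearMap.rTensor H (LinearMap.mulRight k h) (Δ 1) := by
  have e1 : Δ h = Δ 1 * Δ h := by rw [← hm, one_mul]
  calc sw H (ε ∘ₗ LinearMap.mul' k H ∘ₗ (TensorProduct.comm k H H).toLinearMap) (Δ h ⊗ₜ[k] Δ 1)
      = sw H (ε ∘ₗ LinearMap.mul' k H ∘ₗ (TensorProduct.comm k H H).toLinearMap)
          ((Δ 1 * Δ h) ⊗ₜ[k] Δ 1) := by rw [← e1]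
    _ = swm3 (ε ∘ₗ LinearMap.mul' k H) (Δ h ⊗ₜ[k] Gm' H (Δ 1 ⊗ₜ[k] Δ 1)) := step2Ko ε _ _ _
    _ = swm3 (ε ∘ₗ LinearMap.mul' k H)
          (Δ h ⊗ₜ[k] (TensorProduct.assoc k H H H) ((LinearMap.rTensor H Δ) (Δ 1))) := by
        rw [← shapeB, ← huB, ← hco 1]
    _ = LinearMap.rTensor H (ctr2 ε ∘ₗ LinearMap.mulRight k (Δ h) ∘ₗ Δ) (Δ 1) := st3Ko ε Δ _ _
    _ = LinearMap.rTensor H (LinearMap.mulRight k h) (Δ 1) := by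
        have hmap : ctr2 ε ∘ₗ LinearMap.mulRight k (Δ h) ∘ₗ Δ = LinearMap.mulRight k h := by
          ext x
          simp only [LinearMap.comp_apply, LinearMap.mulRight_apply, ctr2_apply]
          rw [← hm]
          exact hcr (x * h)
        rw [hmap]

lemma Koclem
    (hm : ∀ x y : H, Δ (x * y) = Δ x * Δ y)
    (hcl : ∀ h : H, (TensorProduct.lid k H) ((LinearMap.rTensor H ε) (Δ h)) = h)
    (huA : (LinearMap.lTensor H Δ) (Δ 1) =
      (TensorProduct.assoc k H H H) ((Δ 1) ⊗ₜ[k] (1 : H)) * ((1 : H) ⊗ₜ[k] (Δ 1)))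
    (h : H) :
    sw H (ε ∘ₗ LinearMap.mul' k H) (Δ 1 ⊗ₜ[k] Δ h) =
      LinearMap.lTensor H (LinearMap.mulRight k h) (Δ 1) := by
  have e1 : Δ h = Δ 1 * Δ h := by rw [← hm, one_mul]
  calc sw H (ε ∘ₗ LinearMap.mul' k H) (Δ 1 ⊗ₜ[k] Δ h)
      = sw H (ε ∘ₗ LinearMap.mul' k H) (Δ 1 ⊗ₜ[k] (Δ 1 * Δ h)) := by rw [← e1]
    _ = swm4 H (ε ∘ₗ LinearMap.mul' k H) (Δ h ⊗ₜ[k] Gm H (Δ 1 ⊗ₜ[k] Δ 1)) := step2Koc ε H _ _ _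
    _ = swm4 H (ε ∘ₗ LinearMap.mul' k H) (Δ h ⊗ₜ[k] (LinearMap.lTensor H Δ) (Δ 1)) := by
        rw [← shapeA, ← huA]
    _ = LinearMap.lTensor H (ctr1 H ε ∘ₗ LinearMap.mulRight k (Δ h)) ((LinearMap.lTensor H Δ) (Δ 1)) :=
        st3Koc ε H _ _
    _ = LinearMap.lTensor H ((ctr1 H ε ∘ₗ LinearMap.mulRight k (Δ h)) ∘ₗ Δ) (Δ 1) := by
        rw [← LinearMap.comp_apply, ← LinearMap.lTensor_comp]
    _ = LinearMap.lTensor H (LinearMap.mulRight k h) (Δ 1) := by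
        have hmap : (ctr1 H ε ∘ₗ LinearMap.mulRight k (Δ h)) ∘ₗ Δ = LinearMap.mulRight k h := by
          ext x
          simp only [LinearMap.comp_apply, LinearMap.mulRight_apply, ctr1_apply]
          rw [← hm]
          exact hcl (x * h)
        rw [hmap]

lemma KAlem {A : Type*} [Ring A] [Algebra k A] (ρ : A →ₗ[k] H ⊗[k] A)
    (hρm : ∀ a b : A, ρ (a * b) = ρ a * ρ b)
    (hρcu : ∀ a : A, (TensorProduct.lid k A) ((LinearMap.rTensor A ε) (ρ a)) = a)
    (hρu : (LinearMap.lTensor H ρ) (ρ 1) =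
      (LinearMap.lTensor H (DK.innerW k H A))
        ((TensorProduct.assoc k H H (H ⊗[k] A)) ((Δ 1) ⊗ₜ[k] (ρ 1))))
    (b : A) :
    sw A (ε ∘ₗ LinearMap.mul' k H ∘ₗ (TensorProduct.comm k H H).toLinearMap) (Δ 1 ⊗ₜ[k] ρ b) =
      LinearMap.lTensor H (LinearMap.mulLeft k b) (ρ 1) := by
  have e1 : ρ b = ρ b * ρ 1 := by rw [← hρm, mul_one]
  calc sw A (ε ∘ₗ LinearMap.mul' k H ∘ₗ (TensorProduct.comm k H H).toLinearMap) (Δ 1 ⊗ₜ[k] ρ b)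
      = sw A (ε ∘ₗ LinearMap.mul' k H ∘ₗ (TensorProduct.comm k H H).toLinearMap)
          (Δ 1 ⊗ₜ[k] (ρ b * ρ 1)) := by rw [← e1]
    _ = swm2 A (ε ∘ₗ LinearMap.mul' k H) (ρ b ⊗ₜ[k] Gm' A (Δ 1 ⊗ₜ[k] ρ 1)) := step2Kc ε A _ _ _
    _ = swm2 A (ε ∘ₗ LinearMap.mul' k H) (ρ b ⊗ₜ[k] (LinearMap.lTensor H ρ) (ρ 1)) := by
        rw [← shapeRho, ← hρu]
    _ = LinearMap.lTensor H (ctr1 A ε ∘ₗ LinearMap.mulLeft k (ρ b)) ((LinearMap.lTensor H ρ) (ρ 1)) :=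
        st3Kc ε A _ _
    _ = LinearMap.lTensor H ((ctr1 A ε ∘ₗ LinearMap.mulLeft k (ρ b)) ∘ₗ ρ) (ρ 1) := by
        rw [← LinearMap.comp_apply, ← LinearMap.lTensor_comp]
    _ = LinearMap.lTensor H (LinearMap.mulLeft k b) (ρ 1) := by
        have hmap : (ctr1 A ε ∘ₗ LinearMap.mulLeft k (ρ b)) ∘ₗ ρ = LinearMap.mulLeft k b := by
          ext x
          simp only [LinearMap.comp_apply, LinearMap.mulLeft_apply, ctr1_apply]
          rw [← hρm]
          exact hρcu (b * x)
        rw [hmap]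

lemma Dlem
    (hm : ∀ x y : H, Δ (x * y) = Δ x * Δ y)
    (hco : ∀ h : H, (TensorProduct.assoc k H H H) ((LinearMap.rTensor H Δ) (Δ h)) =
      (LinearMap.lTensor H Δ) (Δ h))
    (hcr : ∀ h : H, (TensorProduct.rid k H) ((LinearMap.lTensor H ε) (Δ h)) = h)
    (huA : (LinearMap.lTensor H Δ) (Δ 1) =
      (TensorProduct.assoc k H H H) ((Δ 1) ⊗ₜ[k] (1 : H)) * ((1 : H) ⊗ₜ[k] (Δ 1)))
    (he2 : ∀ x y z : H, ε (x * y * z) = DK.eps2 k H ε x z (Δ y))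
    (g h : H) :
    ctr2 (ε ∘ₗ LinearMap.mulRight k g) (Δ h) =
      h * ctr2 (ε ∘ₗ LinearMap.mulRight k g) (Δ 1) := by
  have hsplit : (ε ∘ₗ LinearMap.mulRight k g : H →ₗ[k] k) =
      ε ∘ₗ LinearMap.mulRight k (ctr2 (ε ∘ₗ LinearMap.mulRight k g) (Δ 1)) := by
    ext x
    simp only [LinearMap.comp_apply, LinearMap.mulRight_apply]
    have h0 := he2 x 1 g
    rw [mul_one] at h0
    rw [h0, eps2_eval]
  calc ctr2 (ε ∘ₗ LinearMap.mulRight k g) (Δ h)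
      = QlinOf ε (Δ h) (ctr2 (ε ∘ₗ LinearMap.mulRight k g) (Δ 1)) := by
        rw [QlinOf_apply, ← hsplit]
    _ = ctr2 (ε ∘ₗ LinearMap.mulRight k g) (sw H (ε ∘ₗ LinearMap.mul' k H) (Δ h ⊗ₜ[k] Δ 1)) :=
        reshD ε g _ _
    _ = ctr2 (ε ∘ₗ LinearMap.mulRight k g) (LinearMap.rTensor H (LinearMap.mulLeft k h) (Δ 1)) := by
        rw [Klem ε Δ hm hco hcr huA h]
    _ = LinearMap.mulLeft k h (ctr2 (ε ∘ₗ LinearMap.mulRight k g) (Δ 1)) := ctr2_rTensor _ _ _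
    _ = h * ctr2 (ε ∘ₗ LinearMap.mulRight k g) (Δ 1) := by simp

lemma Elem {A : Type*} [Ring A] [Algebra k A] (ρ : A →ₗ[k] H ⊗[k] A)
    (he2' : ∀ x y z : H, ε (x * y * z) = DK.eps2' k H ε x z (Δ y))
    (hρm : ∀ a b : A, ρ (a * b) = ρ a * ρ b)
    (hρcu : ∀ a : A, (TensorProduct.lid k A) ((LinearMap.rTensor A ε) (ρ a)) = a)
    (hρu : (LinearMap.lTensor H ρ) (ρ 1) =
      (LinearMap.lTensor H (DK.innerW k H A))
        ((TensorProduct.assoc k H H (H ⊗[k] A)) ((Δ 1) ⊗ₜ[k] (ρ 1))))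
    (g : H) (b : A) :
    ctr1 A (ε ∘ₗ LinearMap.mulRight k g) (ρ b) =
      b * ctr1 A (ε ∘ₗ LinearMap.mulRight k g) (ρ 1) := by
  have hsplit : (ε ∘ₗ LinearMap.mulRight k g : H →ₗ[k] k) =
      ε ∘ₗ LinearMap.mulRight k (ctr1 H (ε ∘ₗ LinearMap.mulRight k g) (Δ 1)) := by
    ext x
    simp only [LinearMap.comp_apply, LinearMap.mulRight_apply]
    have h0 := he2' x 1 g
    rw [mul_one] at h0
    rw [h0, eps2'_eval]
  calc ctr1 A (ε ∘ₗ LinearMap.mulRight k g) (ρ b)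
      = DK.coPi k H A ε (ρ b) (ctr1 H (ε ∘ₗ LinearMap.mulRight k g) (Δ 1)) := by
        rw [coPi_eval, ← hsplit]
    _ = ctr1 A (ε ∘ₗ LinearMap.mulRight k g)
          (sw A (ε ∘ₗ LinearMap.mul' k H ∘ₗ (TensorProduct.comm k H H).toLinearMap)
            (Δ 1 ⊗ₜ[k] ρ b)) := reshE ε g _ _
    _ = ctr1 A (ε ∘ₗ LinearMap.mulRight k g) (LinearMap.lTensor H (LinearMap.mulLeft k b) (ρ 1)) := by
        rw [KAlem ε Δ ρ hρm hρcu hρu b]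
    _ = LinearMap.mulLeft k b (ctr1 A (ε ∘ₗ LinearMap.mulRight k g) (ρ 1)) := ctr1_lTensor A _ _ _
    _ = b * ctr1 A (ε ∘ₗ LinearMap.mulRight k g) (ρ 1) := by simp

lemma FVlem (S : H →ₗ[k] H)
    (hm : ∀ x y : H, Δ (x * y) = Δ x * Δ y)
    (hcl : ∀ h : H, (TensorProduct.lid k H) ((LinearMap.rTensor H ε) (Δ h)) = h)
    (hcr : ∀ h : H, (TensorProduct.rid k H) ((LinearMap.lTensor H ε) (Δ h)) = h)
    (huA : (LinearMap.lTensor H Δ) (Δ 1) =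
      (TensorProduct.assoc k H H H) ((Δ 1) ⊗ₜ[k] (1 : H)) * ((1 : H) ⊗ₜ[k] (Δ 1)))
    (hS2 : ∀ h : H, LinearMap.mul' k H ((LinearMap.rTensor H S) (Δ h)) = DK.PiR k H Δ ε h)
    (h : H) :
    LinearMap.mul' k H (LinearMap.rTensor H S (sw H (ε ∘ₗ LinearMap.mul' k H) (Δ 1 ⊗ₜ[k] Δ h))) =
      h := by
  rw [Koclem ε Δ hm hcl huA h, mSid_mulRight, hS2 1]
  have hone : DK.PiR k H Δ ε 1 = 1 := by
    show DK.coPiR k H H ε (Δ 1) 1 = 1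
    rw [coPiR_one]
    exact hcr 1
  rw [hone, one_mul]

lemma Ylem (S : H →ₗ[k] H)
    (hm : ∀ x y : H, Δ (x * y) = Δ x * Δ y)
    (hco : ∀ h : H, (TensorProduct.assoc k H H H) ((LinearMap.rTensor H Δ) (Δ h)) =
      (LinearMap.lTensor H Δ) (Δ h))
    (hcr : ∀ h : H, (TensorProduct.rid k H) ((LinearMap.lTensor H ε) (Δ h)) = h)
    (huB : (LinearMap.lTensor H Δ) (Δ 1) =
      ((1 : H) ⊗ₜ[k] (Δ 1)) * (TensorProduct.assoc k H H H) ((Δ 1) ⊗ₜ[k] (1 : H)))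
    (hS1 : ∀ h : H, LinearMap.mul' k H ((LinearMap.lTensor H S) (Δ h)) = DK.PiL k H Δ ε h)
    (hS3 : ∀ h : H,
      (LinearMap.mul' k H ∘ₗ LinearMap.lTensor H (LinearMap.mul' k H))
        ((TensorProduct.map S (TensorProduct.map LinearMap.id S))
          ((LinearMap.lTensor H Δ) (Δ h))) = S h)
    (y : H) :
    LinearMap.mul' k H (LinearMap.rTensor H S
      (LinearMap.rTensor H (LinearMap.mulRight k y) (Δ 1))) = S y := by
  rw [← Kolem ε Δ hm hco hcr huB y]
  rw [← lT_coPi ε H (Δ 1) (Δ y)]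
  rw [show LinearMap.rTensor H S (LinearMap.lTensor H (DK.coPi k H H ε (Δ 1)) (Δ y)) =
      TensorProduct.map S (DK.coPi k H H ε (Δ 1)) (Δ y) from by
    rw [← LinearMap.comp_apply, LinearMap.rTensor_comp_lTensor]]
  have hPi : DK.coPi k H H ε (Δ 1) = (LinearMap.mul' k H ∘ₗ LinearMap.lTensor H S) ∘ₗ Δ := by
    ext x
    exact (hS1 x).symm
  rw [hPi]
  have key : ∀ w : H ⊗[k] H,
      LinearMap.mul' k H
        (TensorProduct.map S ((LinearMap.mul' k H ∘ₗ LinearMap.lTensor H S) ∘ₗ Δ) w) =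
      (LinearMap.mul' k H ∘ₗ LinearMap.lTensor H (LinearMap.mul' k H))
        ((TensorProduct.map S (TensorProduct.map LinearMap.id S))
          ((LinearMap.lTensor H Δ) w)) := by
    intro w
    induction w using TensorProduct.induction_on with
    | zero => simp
    | add w₁ w₂ h1 h2 => simp only [map_add, h1, h2]
    | tmul x y' =>
      simp only [TensorProduct.map_tmul, LinearMap.lTensor_tmul, LinearMap.comp_apply,
        LinearMap.mul'_apply]
      rfl
  rw [key]
  exact hS3 y

lemma chainI (S : H →ₗ[k] H)
    (hm : ∀ x y : H, Δ (x * y) = Δ x * Δ y)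
    (hco : ∀ h : H, (TensorProduct.assoc k H H H) ((LinearMap.rTensor H Δ) (Δ h)) =
      (LinearMap.lTensor H Δ) (Δ h))
    (hcl : ∀ h : H, (TensorProduct.lid k H) ((LinearMap.rTensor H ε) (Δ h)) = h)
    (hcr : ∀ h : H, (TensorProduct.rid k H) ((LinearMap.lTensor H ε) (Δ h)) = h)
    (huA : (LinearMap.lTensor H Δ) (Δ 1) =
      (TensorProduct.assoc k H H H) ((Δ 1) ⊗ₜ[k] (1 : H)) * ((1 : H) ⊗ₜ[k] (Δ 1)))
    (huB : (LinearMap.lTensor H Δ) (Δ 1) =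
      ((1 : H) ⊗ₜ[k] (Δ 1)) * (TensorProduct.assoc k H H H) ((Δ 1) ⊗ₜ[k] (1 : H)))
    (he2 : ∀ x y z : H, ε (x * y * z) = DK.eps2 k H ε x z (Δ y))
    (hS1 : ∀ h : H, LinearMap.mul' k H ((LinearMap.lTensor H S) (Δ h)) = DK.PiL k H Δ ε h)
    (hS2 : ∀ h : H, LinearMap.mul' k H ((LinearMap.rTensor H S) (Δ h)) = DK.PiR k H Δ ε h)
    (hS3 : ∀ h : H,
      (LinearMap.mul' k H ∘ₗ LinearMap.lTensor H (LinearMap.mul' k H))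
        ((TensorProduct.map S (TensorProduct.map LinearMap.id S))
          ((LinearMap.lTensor H Δ) (Δ h))) = S h)
    (g : H) :
    DK.PiL k H Δ ε g = S (QlinOf ε (Δ 1) g) := by
  have hFv : (LinearMap.mul' k H ∘ₗ LinearMap.rTensor H (S ∘ₗ QlinOf ε (Δ 1)) ∘ₗ Δ) =
      LinearMap.id := by
    ext h
    simp only [LinearMap.comp_apply, LinearMap.id_coe, id_eq]
    rw [LinearMap.rTensor_comp, LinearMap.comp_apply, rT_Qlin]
    exact FVlem ε Δ S hm hcl hcr huA hS2 h
  have sub1 : ∀ u : H ⊗[k] H,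
      LinearMap.mul' k H (LinearMap.lTensor H S (LinearMap.rTensor H
        (LinearMap.mul' k H ∘ₗ LinearMap.rTensor H (S ∘ₗ QlinOf ε (Δ 1)) ∘ₗ Δ) u)) =
      LinearMap.mul' k H (TensorProduct.map (S ∘ₗ QlinOf ε (Δ 1))
        (LinearMap.mul' k H ∘ₗ LinearMap.lTensor H S)
        ((TensorProduct.assoc k H H H) (LinearMap.rTensor H Δ u))) := by
    intro u
    induction u using TensorProduct.induction_on with
    | zero => simp
    | add u₁ u₂ h1 h2 => simp only [map_add, h1, h2]
    | tmul x q =>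
      simp only [LinearMap.rTensor_tmul, LinearMap.comp_apply, LinearMap.lTensor_tmul,
        LinearMap.mul'_apply]
      generalize Δ x = s
      induction s using TensorProduct.induction_on with
      | zero => simp
      | add s₁ s₂ h1 h2 => simp only [map_add, add_mul, add_tmul, h1, h2]
      | tmul a b => simp [mul_assoc]
  have hD : ctr2 (ε ∘ₗ LinearMap.mulRight k g) ∘ₗ Δ =
      LinearMap.mulRight k (QlinOf ε (Δ 1) g) := by
    ext x
    simp only [LinearMap.comp_apply, LinearMap.mulRight_apply, QlinOf_apply]
    exact Dlem ε Δ hm hco hcr huA he2 g x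
  have z1 : LinearMap.rTensor H (QlinOf ε (Δ 1) ∘ₗ LinearMap.mulRight k g) (Δ 1) =
      LinearMap.rTensor H (LinearMap.mulRight k (QlinOf ε (Δ 1) g)) (Δ 1) := by
    rw [Z1glue, ← shapeA, ← huA, ← hco 1, contract_coassoc, hD]
  calc DK.PiL k H Δ ε g
      = LinearMap.mul' k H (LinearMap.lTensor H S (Δ g)) := (hS1 g).symm
    _ = LinearMap.mul' k H (LinearMap.lTensor H S (LinearMap.rTensor H
          (LinearMap.mul' k H ∘ₗ LinearMap.rTensor H (S ∘ₗ QlinOf ε (Δ 1)) ∘ₗ Δ) (Δ g))) := by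
        rw [hFv]
        simp
    _ = LinearMap.mul' k H (TensorProduct.map (S ∘ₗ QlinOf ε (Δ 1))
          (LinearMap.mul' k H ∘ₗ LinearMap.lTensor H S)
          ((TensorProduct.assoc k H H H) (LinearMap.rTensor H Δ (Δ g)))) := sub1 (Δ g)
    _ = LinearMap.mul' k H (TensorProduct.map (S ∘ₗ QlinOf ε (Δ 1))
          (LinearMap.mul' k H ∘ₗ LinearMap.lTensor H S) ((LinearMap.lTensor H Δ) (Δ g))) := by
        rw [hco g]
    _ = LinearMap.mul' k H (TensorProduct.map (S ∘ₗ QlinOf ε (Δ 1))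
          ((LinearMap.mul' k H ∘ₗ LinearMap.lTensor H S) ∘ₗ Δ) (Δ g)) := by
        rw [map_lT]
    _ = LinearMap.mul' k H (TensorProduct.map (S ∘ₗ QlinOf ε (Δ 1))
          (DK.coPi k H H ε (Δ 1)) (Δ g)) := by
        have hPi : (LinearMap.mul' k H ∘ₗ LinearMap.lTensor H S) ∘ₗ Δ =
            DK.coPi k H H ε (Δ 1) := by
          ext x
          exact hS1 x
        rw [hPi]
    _ = LinearMap.mul' k H (LinearMap.rTensor H (S ∘ₗ QlinOf ε (Δ 1))
          (LinearMap.lTensor H (DK.coPi k H H ε (Δ 1)) (Δ g))) := by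
        rw [show LinearMap.rTensor H (S ∘ₗ QlinOf ε (Δ 1))
              (LinearMap.lTensor H (DK.coPi k H H ε (Δ 1)) (Δ g)) =
            TensorProduct.map (S ∘ₗ QlinOf ε (Δ 1)) (DK.coPi k H H ε (Δ 1)) (Δ g) from by
          rw [← LinearMap.comp_apply, LinearMap.rTensor_comp_lTensor]]
    _ = LinearMap.mul' k H (LinearMap.rTensor H (S ∘ₗ QlinOf ε (Δ 1))
          (LinearMap.rTensor H (LinearMap.mulRight k g) (Δ 1))) := by
        rw [lT_coPi, Kolem ε Δ hm hco hcr huB g]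
    _ = LinearMap.mul' k H (LinearMap.rTensor H S
          (LinearMap.rTensor H (QlinOf ε (Δ 1) ∘ₗ LinearMap.mulRight k g) (Δ 1))) := by
        rw [rT2, rT2, LinearMap.comp_assoc]
    _ = LinearMap.mul' k H (LinearMap.rTensor H S
          (LinearMap.rTensor H (LinearMap.mulRight k (QlinOf ε (Δ 1) g)) (Δ 1))) := by
        rw [z1]
    _ = S (QlinOf ε (Δ 1) g) := Ylem ε Δ S hm hco hcr huB hS1 hS3 _

end Main
end WP
end

/-- In the setting of the previous statement, for all `g ∈ H`, `a ∈ A`: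
`a₍₋₁₎ S⁻¹(Π^L g) ⊗ a₍₀₎ = a₍₋₁₎ ⊗ a₍₀₎ s_A(Π^L g)`.  Consequently the induced coaction
`A → H ⊗_R A` takes values in the Takeuchi product `H ×_R A` (the quotient being by the
balancing relations `S⁻¹(Π^L g) h ⊗ a = h ⊗ s_A(Π^L g) a`, with `t_H = S⁻¹|_R`). -/
theorem stmt12 (k : Type*) [CommRing k] (H : Type*) [Ring H] [Algebra k H]
    (Δ : H →ₗ[k] H ⊗[k] H) (ε : H →ₗ[k] k) (S Sinv : H →ₗ[k] H)
    (A : Type*) [Ring A] [Algebra k A] (ρ : A →ₗ[k] H ⊗[k] A)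
    (hwh : DK.IsWeakHopf k H Δ ε S)
    (hinv1 : ∀ h, Sinv (S h) = h) (hinv2 : ∀ h, S (Sinv h) = h)
    (hA : DK.IsWeakComoduleAlgebra k H Δ ε A ρ) :
    (∀ (g : H) (a : A),
      (LinearMap.rTensor A (LinearMap.mulRight k (Sinv (DK.PiL k H Δ ε g)))) (ρ a) =
        (LinearMap.lTensor H (LinearMap.mulRight k (DK.sAlin k H ε A ρ g))) (ρ a)) ∧
    (∀ (g : H) (a : A),
      (Submodule.span k {x : H ⊗[k] A | ∃ (g' : H) (h : H) (a' : A),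
          x = (Sinv (DK.PiL k H Δ ε g') * h) ⊗ₜ[k] a' -
            h ⊗ₜ[k] (DK.sAlin k H ε A ρ g' * a')}).mkQ
        ((LinearMap.rTensor A (LinearMap.mulRight k (Sinv (DK.PiL k H Δ ε g)))) (ρ a)) =
      (Submodule.span k {x : H ⊗[k] A | ∃ (g' : H) (h : H) (a' : A),
          x = (Sinv (DK.PiL k H Δ ε g') * h) ⊗ₜ[k] a' -
            h ⊗ₜ[k] (DK.sAlin k H ε A ρ g' * a')}).mkQ
        ((LinearMap.lTensor H (LinearMap.mulRight k (DK.sAlin k H ε A ρ g))) (ρ a))) := by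
  obtain ⟨⟨hm, hco, hcl, hcr, he2, he2', huA, huB⟩, hS1, hS2, hS3⟩ := hwh
  obtain ⟨hrco, hrcu, hrm, hru⟩ := hA
  have hpart1 : ∀ (g : H) (a : A),
      (LinearMap.rTensor A (LinearMap.mulRight k (Sinv (DK.PiL k H Δ ε g)))) (ρ a) =
        (LinearMap.lTensor H (LinearMap.mulRight k (DK.sAlin k H ε A ρ g))) (ρ a) := by
    intro g a
    have hQ : Sinv (DK.PiL k H Δ ε g) = WP.QlinOf ε (Δ 1) g := by
      rw [WP.chainI ε Δ S hm hco hcl hcr huA huB he2 hS1 hS2 hS3 g, hinv1]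
    have hD : WP.ctr2 (ε ∘ₗ LinearMap.mulRight k g) ∘ₗ Δ =
        LinearMap.mulRight k (WP.QlinOf ε (Δ 1) g) := by
      ext x
      simp only [LinearMap.comp_apply, LinearMap.mulRight_apply, WP.QlinOf_apply]
      exact WP.Dlem ε Δ hm hco hcr huA he2 g x
    have hE : WP.ctr1 A (ε ∘ₗ LinearMap.mulRight k g) ∘ₗ ρ =
        LinearMap.mulRight k (DK.sAlin k H ε A ρ g) := by
      ext x
      simp only [LinearMap.comp_apply, LinearMap.mulRight_apply]
      rw [WP.Elem ε Δ ρ he2' hrm hrcu hru g x]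
      congr 1
      rw [show DK.sAlin k H ε A ρ g = DK.coPi k H A ε (ρ 1) g from rfl, WP.coPi_eval]
    rw [hQ, ← hD, ← WP.contract_coassoc Δ A (ε ∘ₗ LinearMap.mulRight k g) (ρ a), hrco a]
    rw [show LinearMap.lTensor H (WP.ctr1 A (ε ∘ₗ LinearMap.mulRight k g))
          (LinearMap.lTensor H ρ (ρ a)) =
        LinearMap.lTensor H (WP.ctr1 A (ε ∘ₗ LinearMap.mulRight k g) ∘ₗ ρ) (ρ a) from by
      rw [← LinearMap.comp_apply, ← LinearMap.lTensor_comp]]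
    rw [hE]
  exact ⟨hpart1, fun g a => by rw [hpart1 g a]⟩
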